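/- (Three-term identity) Let τ ∈ ℍ and let w, x, y, z be complex numbers. Set w' = (w+x+y+z)/2, x' = (w+x−y−z)/2, y' = (w−x+y−z)/2, z' = (w−x−y+z)/2, and w'' = (w+x+y−z)/2, x'' = (w+x−y+z)/2, y'' = (w−x+y+z)/2, z'' = (w−x−y−z)/2. Then ϑ₁(w)ϑ₁(x)ϑ₁(y)ϑ₁(z) + ϑ₀(w')ϑ₀(x')ϑ₀(y')ϑ₀(z') − ϑ₀(w'')ϑ₀(x'')ϑ₀(y'')ϑ₀(z'') = 0. -/

import Mathlib

open scoped UpperHalfPlane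

/-- `e(x) = exp(2πix)`. -/
noncomputable def e (x : ℂ) : ℂ := Complex.exp (2 * Real.pi * Complex.I * x)

/-- The theta function with characteristic `(p, q)`:
`θ_{(p,q)}(z,τ) = ∑_{n ∈ ℤ} e((1/2)(n+p)²τ + (n+p)(z+q))`. -/
noncomputable def jtheta (p q : ℝ) (z τ : ℂ) : ℂ :=
  ∑' n : ℤ, e ((1 / 2 : ℂ) * ((n : ℂ) + p) ^ 2 * τ + ((n : ℂ) + p) * (z + q))

/-- Jacobi's basic theta function `ϑ₀(z) = θ_{(0,1/2)}(z,τ)`. -/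
noncomputable def jTheta0 (z τ : ℂ) : ℂ := jtheta 0 (1 / 2) z τ

/-- Jacobi's basic theta function `ϑ₁(z) = θ_{(1/2,1/2)}(z,τ)`. -/
noncomputable def jTheta1 (z τ : ℂ) : ℂ := jtheta (1 / 2) (1 / 2) z τ

/-- Jacobi's basic theta function `ϑ₂(z) = θ_{(1/2,0)}(z,τ)`. -/
noncomputable def jTheta2 (z τ : ℂ) : ℂ := jtheta (1 / 2) 0 z τ

/-- Jacobi's basic theta function `ϑ₃(z) = θ_{(0,0)}(z,τ)`. -/
noncomputable def jTheta3 (z τ : ℂ) : ℂ := jtheta 0 0 z τ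

/-! ### Auxiliary material for the three-term identity -/

open Complex

abbrev I4 : Type := ℤ × ℤ × ℤ × ℤ

lemma e_add (a b : ℂ) : e (a + b) = e a * e b := by
  rw [e, e, e, ← Complex.exp_add]
  ring_nf

lemma e_int (k : ℤ) : e (k : ℂ) = 1 := by
  rw [e, show (2 * (Real.pi : ℂ) * Complex.I * (k : ℂ)) = (k : ℂ) * (2 * Real.pi * Complex.I) by
    ring, Complex.exp_int_mul_two_pi_mul_I]

lemma e_half : e (1 / 2 : ℂ) = -1 := by
  rw [e, show (2 * (Real.pi : ℂ) * Complex.I * (1 / 2 : ℂ)) = Real.pi * Complex.I by ring,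
    Complex.exp_pi_mul_I]

lemma e_eq_of (a b : ℂ) (k : ℤ) (h : a = b + (k : ℂ)) : e a = e b := by
  rw [h, e_add, e_int, mul_one]

lemma e_eq_neg_of (a b : ℂ) (k : ℤ) (h : a = b + (k : ℂ) + 1 / 2) : e a = -e b := by
  rw [h, e_add, e_add, e_int, e_half]
  ring

/-- The summand of `jtheta`. -/
noncomputable def tterm (p q : ℝ) (τ z : ℂ) (n : ℤ) : ℂ :=
  e ((1 / 2 : ℂ) * ((n : ℂ) + p) ^ 2 * τ + ((n : ℂ) + p) * (z + q))

lemma summable_tterm (p q : ℝ) (z : ℂ) (τ : ℍ) : Summable (tterm p q (τ : ℂ) z) := by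
  have h : tterm p q (τ : ℂ) z = fun n : ℤ =>
      e ((1 / 2 : ℂ) * (p : ℂ) ^ 2 * (τ : ℂ) + (p : ℂ) * (z + q)) *
        jacobiTheta₂_term n ((p : ℂ) * (τ : ℂ) + z + q) (τ : ℂ) := by
    funext n
    rw [tterm, e, e, jacobiTheta₂_term, ← Complex.exp_add]
    congr 1
    ring
  have hs : Summable fun n : ℤ => jacobiTheta₂_term n ((p : ℂ) * (τ : ℂ) + z + q) (τ : ℂ) :=
    (summable_jacobiTheta₂_term_iff ((p : ℂ) * (τ : ℂ) + z + q) (τ : ℂ)).mpr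
      (by simpa using τ.im_pos)
  rw [h]
  exact hs.mul_left _

/-- Product of four theta summands, viewed as a function on `ℤ⁴`. -/
noncomputable def Gf (p q : ℝ) (τ z₁ z₂ z₃ z₄ : ℂ) (n : I4) : ℂ :=
  tterm p q τ z₁ n.1 *
    (tterm p q τ z₂ n.2.1 * (tterm p q τ z₃ n.2.2.1 * tterm p q τ z₄ n.2.2.2))

lemma summable_Gf (p q : ℝ) (z₁ z₂ z₃ z₄ : ℂ) (τ : ℍ) :
    Summable (Gf p q (τ : ℂ) z₁ z₂ z₃ z₄) := by
  have h1 := (summable_tterm p q z₁ τ).norm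
  have h2 := (summable_tterm p q z₂ τ).norm
  have h3 := (summable_tterm p q z₃ τ).norm
  have h4 := (summable_tterm p q z₄ τ).norm
  have H := summable_mul_of_summable_norm h1 (h2.mul_norm (h3.mul_norm h4))
  exact H.congr fun n => rfl

lemma key (p q : ℝ) (z₁ z₂ z₃ z₄ : ℂ) (τ : ℍ) :
    jtheta p q z₁ τ * jtheta p q z₂ τ * jtheta p q z₃ τ * jtheta p q z₄ τ
      = ∑' n : I4, Gf p q (τ : ℂ) z₁ z₂ z₃ z₄ n := by
  have h1 := (summable_tterm p q z₁ τ).norm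
  have h2 := (summable_tterm p q z₂ τ).norm
  have h3 := (summable_tterm p q z₃ τ).norm
  have h4 := (summable_tterm p q z₄ τ).norm
  show (∑' n, tterm p q (τ : ℂ) z₁ n) * (∑' n, tterm p q (τ : ℂ) z₂ n) *
      (∑' n, tterm p q (τ : ℂ) z₃ n) * (∑' n, tterm p q (τ : ℂ) z₄ n) = _
  rw [mul_assoc, mul_assoc, tsum_mul_tsum_of_summable_norm h3 h4,
    tsum_mul_tsum_of_summable_norm h2 (h3.mul_norm h4),
    tsum_mul_tsum_of_summable_norm h1 (h2.mul_norm (h3.mul_norm h4))]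
  rfl

/-- Parametrization of the quadruples with even coordinate sum. -/
def P0 (k : I4) : I4 :=
  (k.1, k.2.1, k.2.2.1, 2 * k.2.2.2 - k.1 - k.2.1 - k.2.2.1)

/-- Parametrization of the quadruples with odd coordinate sum. -/
def P1 (k : I4) : I4 :=
  (k.1, k.2.1, k.2.2.1, 2 * k.2.2.2 + 1 - k.1 - k.2.1 - k.2.2.1)

def sEven : Set I4 := {n | (n.1 + n.2.1 + n.2.2.1 + n.2.2.2) % 2 = 0}

def e0 : I4 ≃ sEven where
  toFun k := ⟨P0 k, by simp only [sEven, P0, Set.mem_setOf_eq]; omega⟩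
  invFun a := (a.1.1, a.1.2.1, a.1.2.2.1, (a.1.1 + a.1.2.1 + a.1.2.2.1 + a.1.2.2.2) / 2)
  left_inv k := by
    obtain ⟨a, b, c, d⟩ := k
    simp only [P0, Prod.ext_iff, true_and, and_true]
    omega
  right_inv a := by
    obtain ⟨⟨a, b, c, d⟩, ha⟩ := a
    simp only [sEven, Set.mem_setOf_eq] at ha
    apply Subtype.ext
    simp only [P0, Prod.ext_iff, true_and, and_true]
    omega

def e1 : I4 ≃ ↥sEvenᶜ where
  toFun k := ⟨P1 k, by simp only [sEven, P1, Set.mem_compl_iff, Set.mem_setOf_eq]; omega⟩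
  invFun a := (a.1.1, a.1.2.1, a.1.2.2.1, (a.1.1 + a.1.2.1 + a.1.2.2.1 + a.1.2.2.2 - 1) / 2)
  left_inv k := by
    obtain ⟨a, b, c, d⟩ := k
    simp only [P1, Prod.ext_iff, true_and, and_true]
    omega
  right_inv a := by
    obtain ⟨⟨a, b, c, d⟩, ha⟩ := a
    simp only [sEven, Set.mem_compl_iff, Set.mem_setOf_eq] at ha
    apply Subtype.ext
    simp only [P1, Prod.ext_iff, true_and, and_true]
    omega

lemma tsum_split (F : I4 → ℂ) (hF : Summable F) :
    ∑' n, F n = (∑' k, F (P0 k)) + ∑' k, F (P1 k) := by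
  rw [← Summable.tsum_subtype_add_tsum_subtype_compl hF sEven]
  congr 1
  · exact (e0.tsum_eq fun x => F x).symm
  · exact (e1.tsum_eq fun x => F x).symm

def rhoE : I4 ≃ I4 where
  toFun k := (k.1 - (k.2.2.2 - k.2.1 - k.2.2.1), k.2.1 + (k.2.2.2 - k.2.1 - k.2.2.1),
    k.2.2.1 + (k.2.2.2 - k.2.1 - k.2.2.1), k.2.2.2)
  invFun k := (k.1 - (k.2.2.2 - k.2.1 - k.2.2.1), k.2.1 + (k.2.2.2 - k.2.1 - k.2.2.1),
    k.2.2.1 + (k.2.2.2 - k.2.1 - k.2.2.1), k.2.2.2)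
  left_inv k := by obtain ⟨a, b, c, d⟩ := k; simp only [Prod.ext_iff, true_and, and_true]; omega
  right_inv k := by obtain ⟨a, b, c, d⟩ := k; simp only [Prod.ext_iff, true_and, and_true]; omega

def alphaE : I4 ≃ I4 where
  toFun k := (k.2.2.2, k.1 + k.2.1 - k.2.2.2 - 1, k.1 + k.2.2.1 - k.2.2.2 - 1, k.1 - 1)
  invFun j := (j.2.2.2 + 1, j.1 + j.2.1 - j.2.2.2, j.1 + j.2.2.1 - j.2.2.2, j.1)
  left_inv k := by obtain ⟨a, b, c, d⟩ := k; simp only [Prod.ext_iff, true_and, and_true]; omega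
  right_inv k := by obtain ⟨a, b, c, d⟩ := k; simp only [Prod.ext_iff, true_and, and_true]; omega

def betaE : I4 ≃ I4 where
  toFun k := (k.2.2.2, k.1 + k.2.1 - k.2.2.2 - 1, k.1 + k.2.2.1 - k.2.2.2 - 1,
    k.1 + k.2.1 + k.2.2.1 - k.2.2.2 - 2)
  invFun j := (j.1 + j.2.1 + j.2.2.1 - j.2.2.2, j.2.2.2 - j.2.2.1 + 1, j.2.2.2 - j.2.1 + 1, j.1)
  left_inv k := by obtain ⟨a, b, c, d⟩ := k; simp only [Prod.ext_iff, true_and, and_true]; omega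
  right_inv k := by obtain ⟨a, b, c, d⟩ := k; simp only [Prod.ext_iff, true_and, and_true]; omega

lemma pointA (τ w x y z : ℂ) (k : I4) :
    Gf 0 (1 / 2) τ ((w + x + y + z) / 2) ((w + x - y - z) / 2) ((w - x + y - z) / 2)
        ((w - x - y + z) / 2) (P0 k)
      = Gf 0 (1 / 2) τ ((w + x + y - z) / 2) ((w + x - y + z) / 2) ((w - x + y + z) / 2)
        ((w - x - y - z) / 2) (P0 (rhoE k)) := by
  obtain ⟨a, b, c, d⟩ := k
  simp only [Gf, tterm, P0, rhoE, Equiv.coe_fn_mk]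
  rw [← e_add, ← e_add, ← e_add, ← e_add, ← e_add, ← e_add]
  congr 1
  push_cast
  ring

lemma pointB (τ w x y z : ℂ) (k : I4) :
    Gf 0 (1 / 2) τ ((w + x + y + z) / 2) ((w + x - y - z) / 2) ((w - x + y - z) / 2)
        ((w - x - y + z) / 2) (P1 k)
      = -Gf (1 / 2) (1 / 2) τ w x y z (P0 (alphaE k)) := by
  obtain ⟨a, b, c, d⟩ := k
  simp only [Gf, tterm, P0, P1, alphaE, Equiv.coe_fn_mk]
  rw [← e_add, ← e_add, ← e_add, ← e_add, ← e_add, ← e_add]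
  exact e_eq_neg_of _ _ (d - a) (by push_cast; ring)

lemma pointC (τ w x y z : ℂ) (k : I4) :
    Gf 0 (1 / 2) τ ((w + x + y - z) / 2) ((w + x - y + z) / 2) ((w - x + y + z) / 2)
        ((w - x - y - z) / 2) (P1 k)
      = Gf (1 / 2) (1 / 2) τ w x y z (P1 (betaE k)) := by
  obtain ⟨a, b, c, d⟩ := k
  simp only [Gf, tterm, P1, betaE, Equiv.coe_fn_mk]
  rw [← e_add, ← e_add, ← e_add, ← e_add, ← e_add, ← e_add]
  exact e_eq_of _ _ (2 * d - a - b - c + 1) (by push_cast; ring)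

/-- The three-term identity (Theorem 7.3). -/
theorem three_term_identity (τ : ℍ) (w x y z w' x' y' z' w'' x'' y'' z'' : ℂ)
    (hw' : w' = (w + x + y + z) / 2) (hx' : x' = (w + x - y - z) / 2)
    (hy' : y' = (w - x + y - z) / 2) (hz' : z' = (w - x - y + z) / 2)
    (hw'' : w'' = (w + x + y - z) / 2) (hx'' : x'' = (w + x - y + z) / 2)
    (hy'' : y'' = (w - x + y + z) / 2) (hz'' : z'' = (w - x - y - z) / 2) :
    jTheta1 w τ * jTheta1 x τ * jTheta1 y τ * jTheta1 z τ
      + jTheta0 w' τ * jTheta0 x' τ * jTheta0 y' τ * jTheta0 z' τ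
      - jTheta0 w'' τ * jTheta0 x'' τ * jTheta0 y'' τ * jTheta0 z'' τ = 0 := by
  subst hw' hx' hy' hz' hw'' hx'' hy'' hz''
  have k1 : jTheta1 w τ * jTheta1 x τ * jTheta1 y τ * jTheta1 z τ
      = ∑' n : I4, Gf (1 / 2) (1 / 2) (τ : ℂ) w x y z n := key _ _ _ _ _ _ _
  have k2 : jTheta0 ((w + x + y + z) / 2) τ * jTheta0 ((w + x - y - z) / 2) τ *
        jTheta0 ((w - x + y - z) / 2) τ * jTheta0 ((w - x - y + z) / 2) τ
      = ∑' n : I4, Gf 0 (1 / 2) (τ : ℂ) ((w + x + y + z) / 2) ((w + x - y - z) / 2)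
          ((w - x + y - z) / 2) ((w - x - y + z) / 2) n := key _ _ _ _ _ _ _
  have k3 : jTheta0 ((w + x + y - z) / 2) τ * jTheta0 ((w + x - y + z) / 2) τ *
        jTheta0 ((w - x + y + z) / 2) τ * jTheta0 ((w - x - y - z) / 2) τ
      = ∑' n : I4, Gf 0 (1 / 2) (τ : ℂ) ((w + x + y - z) / 2) ((w + x - y + z) / 2)
          ((w - x + y + z) / 2) ((w - x - y - z) / 2) n := key _ _ _ _ _ _ _
  rw [k1, k2, k3,
    tsum_split (Gf (1 / 2) (1 / 2) (τ : ℂ) w x y z) (summable_Gf _ _ _ _ _ _ τ),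
    tsum_split (Gf 0 (1 / 2) (τ : ℂ) ((w + x + y + z) / 2) ((w + x - y - z) / 2)
      ((w - x + y - z) / 2) ((w - x - y + z) / 2)) (summable_Gf _ _ _ _ _ _ τ),
    tsum_split (Gf 0 (1 / 2) (τ : ℂ) ((w + x + y - z) / 2) ((w + x - y + z) / 2)
      ((w - x + y + z) / 2) ((w - x - y - z) / 2)) (summable_Gf _ _ _ _ _ _ τ)]
  have hA : (∑' k, Gf 0 (1 / 2) (τ : ℂ) ((w + x + y - z) / 2) ((w + x - y + z) / 2)
        ((w - x + y + z) / 2) ((w - x - y - z) / 2) (P0 k))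
      = ∑' k, Gf 0 (1 / 2) (τ : ℂ) ((w + x + y + z) / 2) ((w + x - y - z) / 2)
        ((w - x + y - z) / 2) ((w - x - y + z) / 2) (P0 k) := by
    calc
      (∑' k, Gf 0 (1 / 2) (τ : ℂ) ((w + x + y - z) / 2) ((w + x - y + z) / 2)
          ((w - x + y + z) / 2) ((w - x - y - z) / 2) (P0 k))
        = ∑' k, Gf 0 (1 / 2) (τ : ℂ) ((w + x + y - z) / 2) ((w + x - y + z) / 2)
          ((w - x + y + z) / 2) ((w - x - y - z) / 2) (P0 (rhoE k)) :=
        (rhoE.tsum_eq fun k => Gf 0 (1 / 2) (τ : ℂ) ((w + x + y - z) / 2) ((w + x - y + z) / 2)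
          ((w - x + y + z) / 2) ((w - x - y - z) / 2) (P0 k)).symm
      _ = _ := tsum_congr fun k => (pointA (τ : ℂ) w x y z k).symm
  have hB : (∑' k, Gf 0 (1 / 2) (τ : ℂ) ((w + x + y + z) / 2) ((w + x - y - z) / 2)
        ((w - x + y - z) / 2) ((w - x - y + z) / 2) (P1 k))
      = -∑' k, Gf (1 / 2) (1 / 2) (τ : ℂ) w x y z (P0 k) := by
    calc
      (∑' k, Gf 0 (1 / 2) (τ : ℂ) ((w + x + y + z) / 2) ((w + x - y - z) / 2)
          ((w - x + y - z) / 2) ((w - x - y + z) / 2) (P1 k))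
        = ∑' k, -Gf (1 / 2) (1 / 2) (τ : ℂ) w x y z (P0 (alphaE k)) :=
        tsum_congr fun k => pointB (τ : ℂ) w x y z k
      _ = ∑' k, -Gf (1 / 2) (1 / 2) (τ : ℂ) w x y z (P0 k) := alphaE.tsum_eq fun k => -Gf (1 / 2) (1 / 2) (τ : ℂ) w x y z (P0 k)
      _ = -∑' k, Gf (1 / 2) (1 / 2) (τ : ℂ) w x y z (P0 k) := tsum_neg
  have hC : (∑' k, Gf 0 (1 / 2) (τ : ℂ) ((w + x + y - z) / 2) ((w + x - y + z) / 2)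
        ((w - x + y + z) / 2) ((w - x - y - z) / 2) (P1 k))
      = ∑' k, Gf (1 / 2) (1 / 2) (τ : ℂ) w x y z (P1 k) := by
    calc
      (∑' k, Gf 0 (1 / 2) (τ : ℂ) ((w + x + y - z) / 2) ((w + x - y + z) / 2)
          ((w - x + y + z) / 2) ((w - x - y - z) / 2) (P1 k))
        = ∑' k, Gf (1 / 2) (1 / 2) (τ : ℂ) w x y z (P1 (betaE k)) :=
        tsum_congr fun k => pointC (τ : ℂ) w x y z k
      _ = _ := betaE.tsum_eq fun k => Gf (1 / 2) (1 / 2) (τ : ℂ) w x y z (P1 k)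
  rw [hA, hB, hC]
  ring
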